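/- Suppose X ⊆ ℝⁿ contains a closed path (x¹,...,x^{2m}) with respect to linearly independent directions a¹, a² in ℝⁿ. Then there exists a function F: X → ℝ that cannot be written as F(x) = g₁(a¹·x) + g₂(a²·x) for any functions g₁, g₂: ℝ → ℝ. -/

import Mathlib

open Finset

private lemma alt_sum (c : ℕ → ℝ) (m : ℕ) :
    ∑ j ∈ Finset.range (2*m), (-1:ℝ)^j * c j
      = ∑ a ∈ Finset.range m, (c (2*a) - c (2*a+1)) := by
  induction m with
  | zero => simp
  | succ m ih =>
    have h : 2*(m+1) = (2*m)+1+1 := by ring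
    rw [h, Finset.sum_range_succ, Finset.sum_range_succ, ih, Finset.sum_range_succ]
    have he : (-1:ℝ)^(2*m) = 1 := Even.neg_one_pow ⟨m, by ring⟩
    have ho : (-1:ℝ)^(2*m+1) = -1 := Odd.neg_one_pow ⟨m, by ring⟩
    rw [he, ho]; ring

/-- Conclusion: a nonzero finitely supported "circulation" annihilating all ridge sums. -/
def Concl (z : ℕ → ℝ × ℝ) : Prop :=
  ∃ (μ : ℝ × ℝ → ℝ) (S : Finset (ℝ × ℝ)),
    (∃ p, μ p ≠ 0) ∧ (∀ p ∈ S, ∃ j, z j = p) ∧ (∀ p, μ p ≠ 0 → p ∈ S) ∧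
    (∀ g1 g2 : ℝ → ℝ, ∑ p ∈ S, μ p * (g1 p.1 + g2 p.2) = 0)

private lemma concl_mono (z w : ℕ → ℝ × ℝ)
    (hrel : ∀ p, (∃ j, w j = p) → ∃ k, z k = p) (h : Concl w) : Concl z := by
  obtain ⟨μ, S, hnz, hS, hsupp, hann⟩ := h
  exact ⟨μ, S, hnz, fun p hp => hrel p (hS p hp), hsupp, hann⟩

private lemma concl_swap (z w : ℕ → ℝ × ℝ)
    (hrel : ∀ p, (∃ j, w j = p) → ∃ k, z k = p.swap) (h : Concl w) : Concl z := by
  classical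
  obtain ⟨μ, S, ⟨p₀, hp₀⟩, hS, hsupp, hann⟩ := h
  refine ⟨fun p => μ p.swap, S.image Prod.swap, ⟨p₀.swap, by simpa using hp₀⟩, ?_, ?_, ?_⟩
  · intro p hp
    obtain ⟨q, hq, rfl⟩ := Finset.mem_image.mp hp
    exact hrel q (hS q hq)
  · intro p hp
    have : p.swap ∈ S := hsupp p.swap hp
    exact Finset.mem_image.mpr ⟨p.swap, this, by simp⟩
  · intro g1 g2
    rw [Finset.sum_image (fun a _ b _ h => Prod.swap_injective h)]
    have h2 := hann g2 g1
    calc ∑ q ∈ S, (fun p => μ p.swap) (Prod.swap q) * (g1 (Prod.swap q).1 + g2 (Prod.swap q).2)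
        = ∑ q ∈ S, μ q * (g2 q.1 + g1 q.2) := by
          apply Finset.sum_congr rfl; intro q _; simp [add_comm]
      _ = 0 := h2
private lemma concl_of_inj (m : ℕ) (hm : 0 < m) (z : ℕ → ℝ × ℝ)
    (hper : ∀ j, z (j + 2*m) = z j)
    (h1 : ∀ j, (z (2*j)).1 = (z (2*j+1)).1)
    (h2 : ∀ j, (z (2*j+1)).2 = (z (2*j+2)).2)
    (hinj : ∀ i j, i < 2*m → j < 2*m → z i = z j → i = j) : Concl z := by
  classical
  refine ⟨fun p => ∑ j ∈ Finset.range (2*m), (-1:ℝ)^j * (if z j = p then 1 else 0),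
    (Finset.range (2*m)).image z, ⟨z 0, ?_⟩, ?_, ?_, ?_⟩
  · have hval : ∑ j ∈ Finset.range (2*m), (-1:ℝ)^j * (if z j = z 0 then 1 else 0) = 1 := by
      have : ∀ j ∈ Finset.range (2*m),
          (-1:ℝ)^j * (if z j = z 0 then 1 else 0) = if j = 0 then (-1:ℝ)^j else 0 := by
        intro j hj
        by_cases hj0 : j = 0
        · subst hj0; simp
        · rw [if_neg hj0, if_neg, mul_zero]
          intro h
          exact hj0 (hinj j 0 (Finset.mem_range.mp hj) (by omega) h)
      rw [Finset.sum_congr rfl this, Finset.sum_ite_eq' (Finset.range (2*m)) 0]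
      rw [if_pos (Finset.mem_range.mpr (by omega))]
      simp
    simp only []
    rw [hval]; norm_num
  · intro p hp
    obtain ⟨j, _, hj⟩ := Finset.mem_image.mp hp
    exact ⟨j, hj⟩
  · intro p hp
    by_contra hpS
    apply hp
    apply Finset.sum_eq_zero
    intro j hj
    rw [if_neg, mul_zero]
    intro h
    exact hpS (Finset.mem_image.mpr ⟨j, hj, h⟩)
  · intro g1 g2
    have hrw : ∑ p ∈ (Finset.range (2*m)).image z,
        (∑ j ∈ Finset.range (2*m), (-1:ℝ)^j * (if z j = p then 1 else 0))
          * (g1 p.1 + g2 p.2)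
        = ∑ j ∈ Finset.range (2*m), (-1:ℝ)^j * (g1 (z j).1 + g2 (z j).2) := by
      rw [Finset.sum_congr rfl (fun p _ => Finset.sum_mul _ _ _), Finset.sum_comm]
      apply Finset.sum_congr rfl
      intro j hj
      have : ∀ p ∈ (Finset.range (2*m)).image z,
          (-1:ℝ)^j * (if z j = p then 1 else 0) * (g1 p.1 + g2 p.2)
            = if p = z j then (-1:ℝ)^j * (g1 p.1 + g2 p.2) else 0 := by
        intro p _
        by_cases h : z j = p
        · subst h; simp
        · rw [if_neg h, if_neg (fun hh => h hh.symm)]; ring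
      rw [Finset.sum_congr rfl this, Finset.sum_ite_eq' _ (z j)]
      rw [if_pos (Finset.mem_image.mpr ⟨j, hj, rfl⟩)]
    rw [hrw, alt_sum]
    have step1 : ∀ a ∈ Finset.range m,
        (g1 (z (2*a)).1 + g2 (z (2*a)).2) - (g1 (z (2*a+1)).1 + g2 (z (2*a+1)).2)
          = (fun a => g2 (z (2*a)).2) a - (fun a => g2 (z (2*a)).2) (a+1) := by
      intro a _
      have e1 := h1 a
      have e2 := h2 a
      have e3 : 2*(a+1) = 2*a+2 := by ring
      simp only [e3]
      rw [e1, e2]; ring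
    rw [Finset.sum_congr rfl step1, Finset.sum_range_sub']
    have hz0 : z (2*m) = z 0 := by simpa using hper 0
    simp [hz0]
private lemma stepE (z : ℕ → ℝ × ℝ)
    (hne : ∀ j, z j ≠ z (j+1))
    (h1 : ∀ j, (z (2*j)).1 = (z (2*j+1)).1)
    (h2 : ∀ j, (z (2*j+1)).2 = (z (2*j+2)).2)
    (b M : ℕ) (hb : b % 2 = 0) (hM : 2 ≤ M) (hMe : M % 2 = 0)
    (hw2 : (z (b + (M-1))).2 = (z b).2)
    (hwne : z (b + (M-1)) ≠ z b)
    (key' : ∀ z' : ℕ → ℝ × ℝ, (∀ j, z' (j + M) = z' j) → (∀ j, z' j ≠ z' (j+1)) →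
      (∀ j, (z' (2*j)).1 = (z' (2*j+1)).1) → (∀ j, (z' (2*j+1)).2 = (z' (2*j+2)).2) →
      Concl z') : Concl z := by
  have hM0 : 0 < M := by omega
  set w : ℕ → ℝ × ℝ := fun k => z (b + k % M) with hw
  have hsucc : ∀ k, (k+1) % M = (k % M + 1) % M := by
    intro k
    conv_lhs => rw [Nat.add_mod]
    rw [Nat.mod_eq_of_lt (show 1 < M by omega)]
  have hper' : ∀ j, w (j + M) = w j := by intro j; simp [hw, Nat.add_mod_right]
  have hne' : ∀ j, w j ≠ w (j+1) := by
    intro j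
    have hr : j % M < M := Nat.mod_lt _ hM0
    rcases Nat.lt_or_ge (j % M + 1) M with h | h
    · have : (j+1) % M = j % M + 1 := by rw [hsucc, Nat.mod_eq_of_lt h]
      simp only [hw, this]
      rw [show b + (j % M + 1) = (b + j % M) + 1 by omega]
      exact hne _
    · have heq : j % M = M - 1 := by omega
      have : (j+1) % M = 0 := by rw [hsucc, heq, show M - 1 + 1 = M by omega, Nat.mod_self]
      simp only [hw, this, heq, Nat.add_zero]
      exact hwne
  have h1' : ∀ j, (w (2*j)).1 = (w (2*j+1)).1 := by
    intro j
    have hr : (2*j) % M < M := Nat.mod_lt _ hM0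
    have hre : (2*j) % M % 2 = 0 := by
      rw [Nat.mod_mod_of_dvd _ (by omega : (2:ℕ) ∣ M)]; omega
    have hlt : (2*j) % M + 1 < M := by omega
    have hmod : (2*j+1) % M = (2*j) % M + 1 := by rw [hsucc, Nat.mod_eq_of_lt hlt]
    simp only [hw, hmod]
    obtain ⟨a, ha⟩ : ∃ a, b + (2*j) % M = 2*a := ⟨(b + (2*j) % M)/2, by omega⟩
    rw [show b + ((2*j) % M + 1) = 2*a + 1 by omega, ha]
    exact h1 a
  have h2' : ∀ j, (w (2*j+1)).2 = (w (2*j+2)).2 := by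
    intro j
    have hr : (2*j+1) % M < M := Nat.mod_lt _ hM0
    have hro : (2*j+1) % M % 2 = 1 := by
      rw [Nat.mod_mod_of_dvd _ (by omega : (2:ℕ) ∣ M)]; omega
    rcases Nat.lt_or_ge ((2*j+1) % M + 1) M with h | h
    · have hmod : (2*j+2) % M = (2*j+1) % M + 1 := by
        rw [show 2*j+2 = (2*j+1)+1 by omega, hsucc, Nat.mod_eq_of_lt h]
      simp only [hw, hmod]
      obtain ⟨a, ha⟩ : ∃ a, b + (2*j+1) % M = 2*a+1 := ⟨(b + (2*j+1) % M)/2, by omega⟩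
      rw [show b + ((2*j+1) % M + 1) = 2*a + 2 by omega, ha]
      exact h2 a
    · have heq : (2*j+1) % M = M - 1 := by omega
      have hmod : (2*j+2) % M = 0 := by
        rw [show 2*j+2 = (2*j+1)+1 by omega, hsucc, heq,
          show M - 1 + 1 = M by omega, Nat.mod_self]
      simp only [hw, hmod, heq, Nat.add_zero]
      exact hw2
  exact concl_mono z w (fun p ⟨j, hj⟩ => ⟨b + j % M, hj⟩) (key' w hper' hne' h1' h2')

private lemma stepO (z : ℕ → ℝ × ℝ)
    (hne : ∀ j, z j ≠ z (j+1))
    (h1 : ∀ j, (z (2*j)).1 = (z (2*j+1)).1)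
    (h2 : ∀ j, (z (2*j+1)).2 = (z (2*j+2)).2)
    (b M : ℕ) (hb : b % 2 = 1) (hM : 2 ≤ M) (hMe : M % 2 = 0)
    (hw1 : (z (b + (M-1))).1 = (z b).1)
    (hwne : z (b + (M-1)) ≠ z b)
    (key' : ∀ z' : ℕ → ℝ × ℝ, (∀ j, z' (j + M) = z' j) → (∀ j, z' j ≠ z' (j+1)) →
      (∀ j, (z' (2*j)).1 = (z' (2*j+1)).1) → (∀ j, (z' (2*j+1)).2 = (z' (2*j+2)).2) →
      Concl z') : Concl z := by
  have hM0 : 0 < M := by omega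
  set w : ℕ → ℝ × ℝ := fun k => (z (b + k % M)).swap with hw
  have hsucc : ∀ k, (k+1) % M = (k % M + 1) % M := by
    intro k
    conv_lhs => rw [Nat.add_mod]
    rw [Nat.mod_eq_of_lt (show 1 < M by omega)]
  have hper' : ∀ j, w (j + M) = w j := by intro j; simp [hw, Nat.add_mod_right]
  have hne' : ∀ j, w j ≠ w (j+1) := by
    intro j
    have hr : j % M < M := Nat.mod_lt _ hM0
    rcases Nat.lt_or_ge (j % M + 1) M with h | h
    · have : (j+1) % M = j % M + 1 := by rw [hsucc, Nat.mod_eq_of_lt h]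
      simp only [hw, this]
      rw [show b + (j % M + 1) = (b + j % M) + 1 by omega]
      intro hc
      exact hne (b + j % M) (Prod.swap_injective hc)
    · have heq : j % M = M - 1 := by omega
      have : (j+1) % M = 0 := by rw [hsucc, heq, show M - 1 + 1 = M by omega, Nat.mod_self]
      simp only [hw, this, heq, Nat.add_zero]
      intro hc
      exact hwne (Prod.swap_injective hc)
  have h1' : ∀ j, (w (2*j)).1 = (w (2*j+1)).1 := by
    intro j
    have hr : (2*j) % M < M := Nat.mod_lt _ hM0
    have hre : (2*j) % M % 2 = 0 := by
      rw [Nat.mod_mod_of_dvd _ (by omega : (2:ℕ) ∣ M)]; omega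
    have hlt : (2*j) % M + 1 < M := by omega
    have hmod : (2*j+1) % M = (2*j) % M + 1 := by rw [hsucc, Nat.mod_eq_of_lt hlt]
    simp only [hw, hmod, Prod.fst_swap]
    obtain ⟨a, ha⟩ : ∃ a, b + (2*j) % M = 2*a+1 := ⟨(b + (2*j) % M)/2, by omega⟩
    rw [show b + ((2*j) % M + 1) = 2*a + 2 by omega, ha]
    exact h2 a
  have h2' : ∀ j, (w (2*j+1)).2 = (w (2*j+2)).2 := by
    intro j
    have hr : (2*j+1) % M < M := Nat.mod_lt _ hM0
    have hro : (2*j+1) % M % 2 = 1 := by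
      rw [Nat.mod_mod_of_dvd _ (by omega : (2:ℕ) ∣ M)]; omega
    rcases Nat.lt_or_ge ((2*j+1) % M + 1) M with h | h
    · have hmod : (2*j+2) % M = (2*j+1) % M + 1 := by
        rw [show 2*j+2 = (2*j+1)+1 by omega, hsucc, Nat.mod_eq_of_lt h]
      simp only [hw, hmod, Prod.snd_swap]
      obtain ⟨a, ha⟩ : ∃ a, b + (2*j+1) % M = 2*a := ⟨(b + (2*j+1) % M)/2, by omega⟩
      rw [show b + ((2*j+1) % M + 1) = 2*a + 1 by omega, ha]
      exact h1 a
    · have heq : (2*j+1) % M = M - 1 := by omega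
      have hmod : (2*j+2) % M = 0 := by
        rw [show 2*j+2 = (2*j+1)+1 by omega, hsucc, heq,
          show M - 1 + 1 = M by omega, Nat.mod_self]
      simp only [hw, hmod, heq, Nat.add_zero, Prod.snd_swap]
      exact hw1
  exact concl_swap z w (fun p ⟨j, hj⟩ => ⟨b + j % M, by rw [← hj]; simp [hw]⟩)
    (key' w hper' hne' h1' h2')
private lemma key (m : ℕ) : 0 < m → ∀ z : ℕ → ℝ × ℝ,
    (∀ j, z (j + 2*m) = z j) → (∀ j, z j ≠ z (j+1)) →
    (∀ j, (z (2*j)).1 = (z (2*j+1)).1) → (∀ j, (z (2*j+1)).2 = (z (2*j+2)).2) →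
    Concl z := by
  induction m using Nat.strong_induction_on with
  | _ m ih =>
  intro hm z hper hne h1 h2
  by_cases hinj : ∀ i j, i < 2*m → j < 2*m → z i = z j → i = j
  · exact concl_of_inj m hm z hper h1 h2 hinj
  · push_neg at hinj
    obtain ⟨i0, j0, hi0, hj0, hz0, hij0⟩ := hinj
    have hex : ∃ L, 0 < L ∧ ∃ i, z i = z (i + L) := by
      rcases Nat.lt_or_ge i0 j0 with h | h
      · exact ⟨j0 - i0, by omega, i0, by rw [show i0 + (j0 - i0) = j0 by omega]; exact hz0⟩
      · exact ⟨i0 - j0, by omega, j0, by rw [show j0 + (i0 - j0) = i0 by omega]; exact hz0.symm⟩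
    classical
    set L := Nat.find hex with hLdef
    obtain ⟨hL0, i, hz⟩ := Nat.find_spec hex
    rw [← hLdef] at hz hL0
    have hmin : ∀ L', L' < L → ¬(0 < L' ∧ ∃ i, z i = z (i + L')) := fun L' h => Nat.find_min hex h
    have hL2 : 2 ≤ L := by
      by_contra h
      have hL1 : L = 1 := by omega
      exact hne i (by rw [hL1] at hz; exact hz)
    have hLle : L ≤ 2*m - 1 := by
      have : L ≤ max i0 j0 - min i0 j0 := by
        apply Nat.find_min' hex
        rcases Nat.lt_or_ge i0 j0 with h | h
        · exact ⟨by omega, i0, by rw [show i0 + (max i0 j0 - min i0 j0) = j0 by omega]; exact hz0⟩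
        · exact ⟨by omega, j0, by rw [show j0 + (max i0 j0 - min i0 j0) = i0 by omega]; exact hz0.symm⟩
      omega
    have hkey' : ∀ M, 2 ≤ M → M % 2 = 0 → M ≤ L →
        ∀ z' : ℕ → ℝ × ℝ, (∀ j, z' (j + M) = z' j) → (∀ j, z' j ≠ z' (j+1)) →
        (∀ j, (z' (2*j)).1 = (z' (2*j+1)).1) → (∀ j, (z' (2*j+1)).2 = (z' (2*j+2)).2) →
        Concl z' := by
      intro M hM2 hMe hML z' ha hb hc hd
      have hmm : 2*(M/2) = M := by omega
      exact ih (M/2) (by omega) (by omega) z' (by rw [hmm]; exact ha) hb hc hd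
    rcases Nat.even_or_odd i with ⟨a, hia⟩ | ⟨a, hia⟩ <;>
      rcases Nat.even_or_odd L with ⟨c, hLc⟩ | ⟨c, hLc⟩
    · -- i even, L even : stepE b = i, M = L
      refine stepE z hne h1 h2 i L (by omega) hL2 (by omega) ?_ ?_ (hkey' L hL2 (by omega) le_rfl)
      · obtain ⟨e, he⟩ : ∃ e, i + (L-1) = 2*e+1 := ⟨(i+L-2)/2, by omega⟩
        rw [he]
        have := h2 e
        rw [show 2*e+2 = i + L by omega] at this
        rw [this, ← hz]
      · rw [show i + (L-1) = (i+L) - 1 by omega]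
        intro hc2
        have := hne ((i+L)-1)
        rw [show (i+L) - 1 + 1 = i + L by omega, ← hz] at this
        exact this hc2
    · -- i even, L odd : stepO b = i+1, M = L-1
      have hL3 : 3 ≤ L := by omega
      refine stepO z hne h1 h2 (i+1) (L-1) (by omega) (by omega) (by omega) ?_ ?_
        (hkey' (L-1) (by omega) (by omega) (by omega))
      · rw [show i + 1 + (L-1-1) = i + (L-1) by omega]
        obtain ⟨e, he⟩ : ∃ e, i + (L-1) = 2*e := ⟨(i+L-1)/2, by omega⟩
        rw [he]
        have t1 := h1 e
        rw [show 2*e+1 = i + L by omega] at t1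
        have t2 := h1 a
        rw [show 2*a = i by omega] at t2
        rw [t1, ← hz]
        exact t2
      · rw [show i + 1 + (L-1-1) = (i+1) + (L-2) by omega]
        intro hc2
        exact hmin (L-2) (by omega) ⟨by omega, i+1, hc2.symm⟩
    · -- i odd, L even : stepO b = i, M = L
      refine stepO z hne h1 h2 i L (by omega) hL2 (by omega) ?_ ?_ (hkey' L hL2 (by omega) le_rfl)
      · obtain ⟨e, he⟩ : ∃ e, i + (L-1) = 2*e := ⟨(i+L-1)/2, by omega⟩
        rw [he]
        have := h1 e
        rw [show 2*e+1 = i + L by omega] at this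
        rw [this, ← hz]
      · rw [show i + (L-1) = (i+L) - 1 by omega]
        intro hc2
        have := hne ((i+L)-1)
        rw [show (i+L) - 1 + 1 = i + L by omega, ← hz] at this
        exact this hc2
    · -- i odd, L odd : stepE b = i+1, M = L-1
      have hL3 : 3 ≤ L := by omega
      refine stepE z hne h1 h2 (i+1) (L-1) (by omega) (by omega) (by omega) ?_ ?_
        (hkey' (L-1) (by omega) (by omega) (by omega))
      · rw [show i + 1 + (L-1-1) = i + (L-1) by omega]
        obtain ⟨e, he⟩ : ∃ e, i + (L-1) = 2*e+1 := ⟨(i+L-2)/2, by omega⟩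
        rw [he]
        have t1 := h2 e
        rw [show 2*e+2 = i + L by omega] at t1
        have t2 := h2 a
        rw [show 2*a+1 = i by omega, show 2*a+2 = i+1 by omega] at t2
        rw [t1, ← hz, t2]
      · rw [show i + 1 + (L-1-1) = (i+1) + (L-2) by omega]
        intro hc2
        exact hmin (L-2) (by omega) ⟨by omega, i+1, hc2.symm⟩
/-- If X ⊆ ℝⁿ contains a closed path with respect to linearly independent
directions a¹, a², then some function on X is not a sum of ridge functions
g₁(a¹·x) + g₂(a²·x). -/
theorem stmt_12 (n m : ℕ) (hm : 0 < m) (X : Set (Fin n → ℝ))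
    (a1 a2 : Fin n → ℝ) (hind : LinearIndependent ℝ ![a1, a2])
    (x : ℕ → Fin n → ℝ)
    (hper : ∀ j, x (j + 2 * m) = x j)
    (hX : ∀ j, x j ∈ X)
    (hne : ∀ j, x j ≠ x (j + 1))
    (h1 : ∀ j, ∑ i, a1 i * x (2 * j) i = ∑ i, a1 i * x (2 * j + 1) i)
    (h2 : ∀ j, ∑ i, a2 i * x (2 * j + 1) i = ∑ i, a2 i * x (2 * j + 2) i) :
    ∃ F : (Fin n → ℝ) → ℝ,
      ¬∃ g1 g2 : ℝ → ℝ, ∀ y ∈ X,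
        F y = g1 (∑ i, a1 i * y i) + g2 (∑ i, a2 i * y i) := by
  classical
  set T : (Fin n → ℝ) → ℝ × ℝ :=
    fun y => (∑ i, a1 i * y i, ∑ i, a2 i * y i) with hT
  by_cases hcol : ∃ i j : ℕ, T (x i) = T (x j) ∧ x i ≠ x j
  · obtain ⟨i, j, hTe, hxne⟩ := hcol
    refine ⟨fun y => if y = x i then 1 else 0, ?_⟩
    rintro ⟨g1, g2, hg⟩
    have hi := hg (x i) (hX i)
    have hj := hg (x j) (hX j)
    simp only [if_pos rfl] at hi
    rw [show (fun y => if y = x i then (1:ℝ) else 0) (x j) = 0 from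
      if_neg (fun h => hxne h.symm)] at hj
    have e1 : (∑ i', a1 i' * x i i') = (T (x i)).1 := rfl
    have e2 : (∑ i', a2 i' * x i i') = (T (x i)).2 := rfl
    have e3 : (∑ i', a1 i' * x j i') = (T (x j)).1 := rfl
    have e4 : (∑ i', a2 i' * x j i') = (T (x j)).2 := rfl
    rw [e1, e2, hTe] at hi
    rw [e3, e4] at hj
    rw [← hj] at hi
    norm_num at hi
  · push_neg at hcol
    have hzC := key m hm (fun k => T (x k))
      (fun j => by show T (x (j + 2 * m)) = T (x j); rw [hper j])
      (fun j h => hne j (hcol j (j+1) h))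
      (fun j => h1 j) (fun j => h2 j)
    obtain ⟨μ, S, ⟨p₀, hp₀⟩, hSz, hsupp, hann⟩ := hzC
    refine ⟨fun y => μ (T y), ?_⟩
    rintro ⟨g1, g2, hg⟩
    have hterm : ∀ p ∈ S, g1 p.1 + g2 p.2 = μ p := by
      intro p hp
      obtain ⟨j, hj⟩ := hSz p hp
      have := hg (x j) (hX j)
      simp only [] at hj
      rw [← hj]
      exact this.symm
    have hzero : ∑ p ∈ S, μ p * μ p = 0 := by
      rw [← hann g1 g2]
      exact (Finset.sum_congr rfl (fun p hp => by rw [hterm p hp])).symm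
    have hall : ∀ p ∈ S, μ p * μ p = 0 := by
      intro p hp
      have hnn : ∀ q ∈ S, 0 ≤ μ q * μ q := fun q _ => mul_self_nonneg _
      exact (Finset.sum_eq_zero_iff_of_nonneg hnn).mp hzero p hp
    have := hall p₀ (hsupp p₀ hp₀)
    exact hp₀ (by nlinarith [this])
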